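/- Let f(x) ∈ ℤ[x] be a monic polynomial of degree d ≥ 1. Then there exist infinitely many primes p such that f splits into linear factors over ℤ/p. -/

import Mathlib

open Polynomial

/-- Schur's lemma: a nonconstant integer polynomial has a root modulo
infinitely many primes (here: modulo a prime avoiding any finite set). -/
lemma schur_root (g : Polynomial ℤ) (hg : 1 ≤ g.natDegree) (s : Finset ℕ) :
    ∃ p : ℕ, p.Prime ∧ p ∉ s ∧ ∃ t : ZMod p,
      g.eval₂ (Int.castRingHom (ZMod p)) t = 0 := by
  have keyval : ∀ (p : ℕ) (_ : p.Prime) (n : ℤ), (p : ℤ) ∣ g.eval n →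
      g.eval₂ (Int.castRingHom (ZMod p)) ((n : ZMod p)) = 0 := by
    intro p hp n hdvd
    have : g.eval₂ (Int.castRingHom (ZMod p)) ((n : ZMod p)) = ((g.eval n : ℤ) : ZMod p) := by
      rw [← eval_map]
      exact eval_intCast_map (Int.castRingHom (ZMod p)) g n
    rw [this]
    exact (ZMod.intCast_zmod_eq_zero_iff_dvd _ _).mpr hdvd
  by_cases hc : g.eval 0 = 0
  · obtain ⟨p, hps, hp⟩ := Nat.exists_infinite_primes (s.sup id + 1)
    refine ⟨p, hp, ?_, (0 : ZMod p), ?_⟩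
    · intro hmem
      have := Finset.le_sup (f := id) hmem
      simp only [id] at this
      omega
    · have := keyval p hp 0 (by rw [hc]; exact dvd_zero _)
      simpa using this
  · set c : ℤ := g.eval 0 with hcdef
    set P : ℤ := ∏ p ∈ s, ((max p 1 : ℕ) : ℤ) with hP
    have hPpos : 0 < P := Finset.prod_pos (fun p hp => by positivity)
    have hA : c * P ≠ 0 := mul_ne_zero hc (by positivity)
    set G : Polynomial ℤ := g.comp (C (c*P) * X) with hG
    have hdeg : G.natDegree = g.natDegree := by
      rw [hG, natDegree_comp, natDegree_C_mul hA, natDegree_X, mul_one]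
    have h1 : G ≠ 0 := fun h => by rw [h] at hdeg; simp at hdeg; omega
    have h2 : G - C c ≠ 0 := fun h => by
      have : G = C c := by linear_combination (norm := ring_nf) h
      rw [this, natDegree_C] at hdeg; omega
    have h3 : G + C c ≠ 0 := fun h => by
      have : G = C (-c) := by rw [map_neg]; linear_combination (norm := ring_nf) h
      rw [this, natDegree_C] at hdeg; omega
    have hfin : ({k : ℤ | G.IsRoot k} ∪
        ({k : ℤ | (G - C c).IsRoot k} ∪ {k : ℤ | (G + C c).IsRoot k})).Finite :=
      (finite_setOf_isRoot h1).union ((finite_setOf_isRoot h2).union (finite_setOf_isRoot h3))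
    obtain ⟨k, hk⟩ := hfin.infinite_compl.nonempty
    simp only [Set.mem_compl_iff, Set.mem_union, Set.mem_setOf_eq, IsRoot.def, not_or,
      eval_sub, eval_add, eval_C, sub_eq_zero] at hk
    obtain ⟨hk0, hkc, hkc'⟩ := hk
    have hGk : G.eval k = g.eval (c * P * k) := by
      rw [hG, eval_comp]; simp
    obtain ⟨m, hm⟩ : c * P * k ∣ g.eval (c * P * k) - c := by
      have := sub_dvd_eval_sub (c * P * k) 0 g
      simpa [hcdef] using this
    set w : ℤ := 1 + P * k * m with hw
    have hval : g.eval (c * P * k) = c * w := by rw [hw]; linarith [hm.symm ▸ (by ring : c * P * k * m = c * (P*k*m))]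
    have hw0 : w ≠ 0 := fun h => hk0 (by rw [hGk, hval, h, mul_zero])
    have hw1 : w ≠ 1 := fun h => hkc (by rw [hGk, hval, h, mul_one])
    have hw1' : w ≠ -1 := fun h => hkc' (by rw [hGk, hval, h]; ring)
    have hwna : w.natAbs ≠ 1 := by
      intro h
      rcases Int.natAbs_eq_iff.mp h with h' | h' <;> simp_all
    obtain ⟨q, hq, hqdvd⟩ := Nat.exists_prime_and_dvd hwna
    have hqw : (q : ℤ) ∣ w := Int.natCast_dvd_natCast.mpr hqdvd |>.trans (Int.natAbs_dvd.mpr dvd_rfl)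
    refine ⟨q, hq, ?_, ((c * P * k : ℤ) : ZMod q), keyval q hq _ ?_⟩
    · intro hmem
      have hqP : (q : ℤ) ∣ P := by
        have h1 : ((max q 1 : ℕ) : ℤ) ∣ P := Finset.dvd_prod_of_mem _ hmem
        have : max q 1 = q := max_eq_left hq.one_lt.le
        rwa [this] at h1
      have hq1 : (q : ℤ) ∣ 1 := by
        have hdvd1 : (q:ℤ) ∣ w - 1 := by
          have hw1e : w - 1 = P * (k * m) := by rw [hw]; ring
          rw [hw1e]; exact hqP.mul_right _
        have := dvd_sub hqw hdvd1
        simpa using this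
      have h2q := hq.two_le
      have := Int.le_of_dvd one_pos hq1
      omega
    · rw [hval]
      exact Dvd.dvd.mul_left hqw c

/-- corollary of Frobenius density: for any monic integer
polynomial `f` of degree `d ≥ 1`, there are infinitely many primes `p`
such that `f` splits into linear factors over `ℤ/p`. -/
theorem stmt4 (f : Polynomial ℤ) (hf : f.Monic) (d : ℕ) (hd : f.natDegree = d)
    (hd1 : 1 ≤ d) :
    {p : ℕ | p.Prime ∧ ∃ r : Fin d → ZMod p,
      f.map (Int.castRingHom (ZMod p)) =
        ∏ k : Fin d, (Polynomial.X - Polynomial.C (r k))}.Infinite := by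
  -- Step 1: split f over the splitting field K with roots α i
  set fQ := f.map (Int.castRingHom ℚ) with hfQdef
  set K := Polynomial.SplittingField fQ with hKdef
  have hcomp : (algebraMap ℚ K).comp (Int.castRingHom ℚ) = Int.castRingHom K :=
    Subsingleton.elim _ _
  have hfK : f.map (Int.castRingHom K) = fQ.map (algebraMap ℚ K) := by
    rw [map_map, hcomp]
  have hsplits : Splits (fQ.map (algebraMap ℚ K)) := SplittingField.splits _
  have hfKsplits : Splits (f.map (Int.castRingHom K)) := by
    rw [hfK]; exact hsplits
  have hfKmonic : (f.map (Int.castRingHom K)).Monic := hf.map _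
  have hcard : (f.map (Int.castRingHom K)).roots.card = d := by
    have h1 := hsplits.natDegree_eq_card_roots.symm
    rw [← hfK] at h1
    rw [h1, hf.natDegree_map (Int.castRingHom K), hd]
  obtain ⟨l, hl⟩ := Quotient.exists_rep (f.map (Int.castRingHom K)).roots
  have hlen : l.length = d := by
    rw [← hcard, ← hl]; rfl
  subst hlen
  set α : Fin l.length → K := fun i => l.get i with hα
  have hprod : f.map (Int.castRingHom K) = ∏ i, (X - C (α i)) := by
    have h0 := hfKsplits.eq_prod_roots_of_monic hfKmonic
    rw [← hl] at h0
    rw [h0]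
    have h1 : (Multiset.map (fun a => X - C a) (⟦l⟧ : Multiset K)).prod
        = (l.map (fun a => X - C a)).prod := rfl
    rw [h1]
    have h2 : (l.map (fun a => X - (C a : Polynomial K))) = List.ofFn (fun i => X - C (l.get i)) := by
      conv_lhs => rw [← List.ofFn_get l]
      rw [List.map_ofFn]
      rfl
    rw [h2, List.prod_ofFn]
  clear hl hcard
  -- Step 2: primitive element θ, made integral over ℤ
  obtain ⟨θ₀, hθ₀⟩ := Field.exists_primitive_element ℚ K
  have hθ₀alg : IsAlgebraic ℤ θ₀ := by
    rw [IsFractionRing.isAlgebraic_iff ℤ ℚ K]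
    exact (IsIntegral.of_finite ℚ θ₀).isAlgebraic
  obtain ⟨y, hy0, hyint⟩ := hθ₀alg.exists_integral_multiple
  have hθint' : IsIntegral ℤ (algebraMap ℤ K y * θ₀) := by rwa [← Algebra.smul_def]
  set θ : K := algebraMap ℤ K y * θ₀ with hθdef
  have hθint : IsIntegral ℤ θ := hθint'
  -- every element of K lies in ℚ-adjoin of θ
  have hθ₀mem : θ₀ ∈ IntermediateField.adjoin ℚ {θ} := by
    have hy : (y : ℚ) ≠ 0 := Int.cast_ne_zero.mpr hy0
    have hmem : θ ∈ IntermediateField.adjoin ℚ {θ} :=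
      IntermediateField.mem_adjoin_simple_self ℚ θ
    have h1 : ((y : ℚ)⁻¹) • θ = θ₀ := by
      rw [hθdef, Algebra.smul_def]
      have : algebraMap ℤ K y = algebraMap ℚ K (y : ℚ) := by
        rw [IsScalarTower.algebraMap_apply ℤ ℚ K y, eq_intCast (algebraMap ℤ ℚ) y]
      rw [this, ← mul_assoc, ← map_mul, inv_mul_cancel₀ hy, map_one, one_mul]
    rw [← h1, Algebra.smul_def]
    exact mul_mem (IntermediateField.algebraMap_mem _ _) hmem
  have hmemAdj : ∀ z : K, z ∈ Algebra.adjoin ℚ {θ} := by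
    intro z
    have htop : IntermediateField.adjoin ℚ {θ} = ⊤ := by
      rw [eq_top_iff, ← hθ₀]
      exact IntermediateField.adjoin_simple_le_iff.mpr hθ₀mem
    have hz : z ∈ IntermediateField.adjoin ℚ {θ} := by rw [htop]; trivial
    have heq := IntermediateField.adjoin_simple_toSubalgebra_of_isAlgebraic
      (IsIntegral.of_finite ℚ θ).isAlgebraic
    rw [← heq]
    exact hz
  -- Step 3: common denominator N with N • α i ∈ ℤ-adjoin of θ
  have hden : ∀ i : Fin l.length, ∃ b : ℤ, b ≠ 0 ∧ b • (α i) ∈ Algebra.adjoin ℤ {θ} := by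
    intro i
    have h1 := hmemAdj (α i)
    rw [Algebra.adjoin_singleton_eq_range_aeval] at h1
    obtain ⟨q, hq⟩ := h1
    obtain ⟨b, hb⟩ := IsLocalization.integerNormalization_map_to_map (nonZeroDivisors ℤ) q
    refine ⟨b, nonZeroDivisors.ne_zero b.2, ?_⟩
    have h2 : (aeval θ) ((IsLocalization.integerNormalization (nonZeroDivisors ℤ) q).map
        (algebraMap ℤ ℚ)) = (b : ℤ) • (α i) := by
      rw [hb, map_zsmul]
      exact congrArg (fun z => (b : ℤ) • z) hq
    rw [aeval_map_algebraMap] at h2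
    rw [Algebra.adjoin_singleton_eq_range_aeval]
    exact ⟨_, h2⟩
  choose b hb0 hbmem using hden
  set N : ℤ := ∏ i, b i with hN
  have hN0 : N ≠ 0 := Finset.prod_ne_zero_iff.mpr fun i _ => hb0 i
  have hNmem : ∀ i, N • α i ∈ Algebra.adjoin ℤ {θ} := by
    intro i
    have h1 : N = (∏ j ∈ Finset.univ.erase i, b j) * b i :=
      (Finset.prod_erase_mul _ _ (Finset.mem_univ i)).symm
    rw [h1, mul_smul]
    exact Subalgebra.smul_mem _ (hbmem i) _
  -- Step 4: AdjoinRoot of the minimal polynomial of θ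
  set g := minpoly ℤ θ with hg
  have hgdeg : 1 ≤ g.natDegree := minpoly.natDegree_pos hθint
  set e := minpoly.equivAdjoin hθint with he
  set j : AdjoinRoot g →+* K :=
    ((Algebra.adjoin ℤ {θ}).val.comp e.toAlgHom).toRingHom with hj
  have hjinj : Function.Injective j := by
    rw [hj]
    exact Subtype.val_injective.comp e.injective
  set a : Fin l.length → AdjoinRoot g := fun i => e.symm ⟨N • α i, hNmem i⟩ with ha
  have hja : ∀ i, j (a i) = (N : K) * α i := by
    intro i
    have : j (a i) = ((e (e.symm ⟨N • α i, hNmem i⟩)) : K) := rfl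
    rw [this, e.apply_symm_apply]
    exact zsmul_eq_mul (α i) N ▸ rfl
  -- the key identity over K
  have hKid : ∏ i : Fin l.length, (C ((N:K)) * X - C ((N:K) * α i))
      = C ((N:K))^l.length * f.map (Int.castRingHom K) := by
    have h1 : ∀ i : Fin l.length, C ((N:K)) * X - C ((N:K) * α i)
        = C ((N:K)) * (X - C (α i)) := by
      intro i; rw [map_mul]; ring
    simp_rw [h1]
    rw [Finset.prod_mul_distrib, Finset.prod_const, Finset.card_univ, Fintype.card_fin, hprod]
  -- transport it to AdjoinRoot g by injectivity
  have hRid : ∏ i : Fin l.length, (C ((N : AdjoinRoot g)) * X - C (a i))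
      = C ((N : AdjoinRoot g))^l.length * f.map (Int.castRingHom (AdjoinRoot g)) := by
    apply map_injective j hjinj
    simp only [Polynomial.map_prod, Polynomial.map_sub, Polynomial.map_mul,
      Polynomial.map_pow, Polynomial.map_C, Polynomial.map_X, Polynomial.map_intCast,
      map_intCast, map_map,
      (Subsingleton.elim (j.comp (Int.castRingHom (AdjoinRoot g))) (Int.castRingHom K))]
    simp_rw [hja]
    simp only [C_eq_intCast] at hKid
    exact hKid
  -- Step 5: infinitude via Schur
  by_contra hinf
  rw [Set.not_infinite] at hinf
  obtain ⟨p, hp, hps, t, ht⟩ := schur_root g hgdeg (hinf.toFinset ∪ N.natAbs.primeFactors)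
  haveI : Fact p.Prime := ⟨hp⟩
  have hpN : ((N : ℤ) : ZMod p) ≠ 0 := by
    intro h0
    have h1 : (p : ℤ) ∣ N := (ZMod.intCast_zmod_eq_zero_iff_dvd _ _).mp h0
    have h2 : p ∣ N.natAbs := Int.natCast_dvd_natCast.mp (Int.dvd_natAbs.mpr h1)
    exact hps (Finset.mem_union_right _ (Nat.mem_primeFactors.mpr
      ⟨hp, h2, Int.natAbs_ne_zero.mpr hN0⟩))
  set φ : AdjoinRoot g →+* ZMod p := AdjoinRoot.lift (Int.castRingHom (ZMod p)) t ht with hφ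
  set u : ZMod p := ((N : ℤ) : ZMod p) with hu
  set r : Fin l.length → ZMod p := fun i => u⁻¹ * φ (a i) with hr
  have hmain : f.map (Int.castRingHom (ZMod p)) = ∏ i : Fin l.length, (X - C (r i)) := by
    have h1 := congrArg (Polynomial.map φ) hRid
    simp only [Polynomial.map_prod, Polynomial.map_sub, Polynomial.map_mul,
      Polynomial.map_pow, Polynomial.map_C, Polynomial.map_X, Polynomial.map_intCast,
      map_intCast, map_map,
      (Subsingleton.elim (φ.comp (Int.castRingHom (AdjoinRoot g))) (Int.castRingHom (ZMod p)))] at h1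
    have hCN : ((N : Polynomial (ZMod p))) = C u := (C_eq_intCast N).symm
    rw [hCN] at h1
    have h2 : ∀ i : Fin l.length, C u * X - C (φ (a i)) = C u * (X - C (r i)) := by
      intro i
      rw [hr, mul_sub, ← C_mul, ← mul_assoc, mul_inv_cancel₀ hpN, one_mul]
    have h3 : ∀ i : Fin l.length, (C ((N : ℤ) : ZMod p)) * X - C (φ (a i)) = C u * (X - C (r i)) :=
      fun i => h2 i
    simp_rw [h2] at h1
    rw [Finset.prod_mul_distrib, Finset.prod_const, Finset.card_univ, Fintype.card_fin] at h1
    have hCu : (C u : Polynomial (ZMod p))^l.length ≠ 0 :=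
      pow_ne_zero _ (fun h => hpN (by simpa using congrArg (fun q => q.coeff 0) h))
    exact (mul_left_cancel₀ hCu h1.symm)
  exact hps (Finset.mem_union_left _ (Set.Finite.mem_toFinset hinf |>.mpr ⟨hp, r, hmain⟩))
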